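/- The iterated integral ∫₀¹ ( ∫_u^{(1+u)/2} (1/r)·log((1+u)/r − 1) dr ) du equals π²/12. -/

import Mathlib

open Real MeasureTheory intervalIntegral Set Filter Topology

namespace PiSq12

noncomputable def q (v : ℝ) : ℝ := -Real.log v / (1 + v)
noncomputable def h (v : ℝ) : ℝ := -Real.log v / (v * (1 + v))
noncomputable def P (u : ℝ) : ℝ := ∫ v in u..1, h v
noncomputable def Q (u : ℝ) : ℝ := ∫ v in (0:ℝ)..u, q v

lemma neg_log_le {v : ℝ} (hv : 0 < v) : -Real.log v ≤ 2 * v ^ (-(1/2) : ℝ) := by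
  have h1 : Real.log (v ^ (-(1/2):ℝ)) = (-(1/2):ℝ) * Real.log v := Real.log_rpow hv _
  have h2 : Real.log (v ^ (-(1/2):ℝ)) ≤ v ^ (-(1/2):ℝ) - 1 :=
    Real.log_le_sub_one_of_pos (Real.rpow_pos_of_pos hv _)
  have h3 : (0:ℝ) < v ^ (-(1/2):ℝ) := Real.rpow_pos_of_pos hv _
  linarith

lemma sq_log_le {v : ℝ} (hv : 0 < v) (hv1 : v ≤ 1) : (Real.log v)^2 ≤ 16 * v ^ (-(1/2) : ℝ) := by
  have h1 : Real.log (v ^ (-(1/4):ℝ)) = (-(1/4):ℝ) * Real.log v := Real.log_rpow hv _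
  have h2 : Real.log (v ^ (-(1/4):ℝ)) ≤ v ^ (-(1/4):ℝ) - 1 :=
    Real.log_le_sub_one_of_pos (Real.rpow_pos_of_pos hv _)
  have h3 : (0:ℝ) < v ^ (-(1/4):ℝ) := Real.rpow_pos_of_pos hv _
  have h4 : -Real.log v ≤ 4 * v ^ (-(1/4):ℝ) := by linarith
  have h5 : Real.log v ≤ 0 := Real.log_nonpos hv.le hv1
  have h6 : v ^ (-(1/4):ℝ) * v ^ (-(1/4):ℝ) = v ^ (-(1/2):ℝ) := by
    rw [← Real.rpow_add hv]; norm_num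
  nlinarith

lemma int_rpow : IntervalIntegrable (fun v : ℝ => v ^ (-(1/2) : ℝ)) volume 0 1 :=
  intervalIntegral.intervalIntegrable_rpow' (by norm_num)

/-- comparison helper on `(0,1]` -/
lemma int_of_bound {f : ℝ → ℝ} (hm : AEStronglyMeasurable f (volume.restrict (Ioc (0:ℝ) 1)))
    (hb : ∀ v ∈ Ioc (0:ℝ) 1, ‖f v‖ ≤ 16 * v ^ (-(1/2) : ℝ)) :
    IntervalIntegrable f volume 0 1 := by
  rw [intervalIntegrable_iff_integrableOn_Ioc_of_le (by norm_num)]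
  have hg : IntegrableOn (fun v : ℝ => 16 * v ^ (-(1/2) : ℝ)) (Ioc 0 1) := by
    have := int_rpow
    rw [intervalIntegrable_iff_integrableOn_Ioc_of_le (by norm_num)] at this
    exact this.const_mul 16
  exact Integrable.mono' hg hm ((ae_restrict_iff' measurableSet_Ioc).2 (.of_forall hb))

lemma int_neg_log : IntervalIntegrable (fun v : ℝ => -Real.log v) volume 0 1 := by
  refine int_of_bound (Real.measurable_log.neg.aestronglyMeasurable) (fun v hv => ?_)
  have h1 := neg_log_le hv.1
  have h2 : Real.log v ≤ 0 := Real.log_nonpos hv.1.le hv.2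
  have h3 : (0:ℝ) < v ^ (-(1/2):ℝ) := Real.rpow_pos_of_pos hv.1 _
  rw [Real.norm_eq_abs, abs_of_nonneg (by linarith)]
  linarith

lemma int_q : IntervalIntegrable q volume 0 1 := by
  refine int_of_bound ((Real.measurable_log.neg.div
    (measurable_const.add measurable_id)).aestronglyMeasurable) (fun v hv => ?_)
  have h1 := neg_log_le hv.1
  have h2 : Real.log v ≤ 0 := Real.log_nonpos hv.1.le hv.2
  have h3 : (0:ℝ) < v ^ (-(1/2):ℝ) := Real.rpow_pos_of_pos hv.1 _
  have h4 : (1:ℝ) ≤ 1 + v := by linarith [hv.1]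
  have h5 : (0:ℝ) ≤ -Real.log v / (1 + v) := div_nonneg (by linarith) (by linarith)
  rw [q, Real.norm_eq_abs, abs_of_nonneg h5]
  have : -Real.log v / (1 + v) ≤ -Real.log v := by
    rw [div_le_iff₀ (by linarith)]; nlinarith
  linarith

lemma int_pow_neg_log (n : ℕ) :
    IntervalIntegrable (fun v : ℝ => v ^ n * (-Real.log v)) volume 0 1 := by
  refine int_of_bound ((measurable_id.pow_const n).mul
    Real.measurable_log.neg).aestronglyMeasurable (fun v hv => ?_)
  have h1 := neg_log_le hv.1
  have h2 : Real.log v ≤ 0 := Real.log_nonpos hv.1.le hv.2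
  have h3 : (0:ℝ) < v ^ (-(1/2):ℝ) := Real.rpow_pos_of_pos hv.1 _
  have h4 : (0:ℝ) < v ^ n := pow_pos hv.1 n
  have h5 : v ^ n ≤ 1 := pow_le_one₀ hv.1.le hv.2
  rw [Real.norm_eq_abs, abs_of_nonneg (by nlinarith)]
  nlinarith


lemma tendsto_primitive_left {f : ℝ → ℝ} (hf : IntervalIntegrable f volume 0 1) :
    Tendsto (fun ε => ∫ v in ε..1, f v) (𝓝[>] (0:ℝ)) (𝓝 (∫ v in (0:ℝ)..1, f v)) := by
  have hint : IntegrableOn f (uIcc (0:ℝ) 1) volume := by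
    rw [uIcc_of_le (by norm_num : (0:ℝ) ≤ 1)]
    rwa [intervalIntegrable_iff_integrableOn_Icc_of_le (by norm_num)] at hf
  have hc := (intervalIntegral.continuousOn_primitive_interval_left hint) 0
    (by rw [uIcc_of_le (by norm_num : (0:ℝ) ≤ 1)]; exact ⟨le_refl 0, by norm_num⟩)
  have h2 : Tendsto (fun ε => ∫ v in ε..1, f v) (𝓝[uIcc (0:ℝ) 1] 0) (𝓝 (∫ v in (0:ℝ)..1, f v)) := hc
  refine h2.mono_left ?_
  rw [uIcc_of_le (by norm_num : (0:ℝ) ≤ 1),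
    ← nhdsWithin_Ioc_eq_nhdsGT (by norm_num : (0:ℝ) < 1)]
  exact nhdsWithin_mono _ Ioc_subset_Icc_self

lemma tendsto_primitive_right {f : ℝ → ℝ} (hf : IntervalIntegrable f volume 0 1) :
    Tendsto (fun x => ∫ v in (0:ℝ)..x, f v) (𝓝[>] (0:ℝ)) (𝓝 0) := by
  have hint : IntegrableOn f (uIcc (0:ℝ) 1) volume := by
    rw [uIcc_of_le (by norm_num : (0:ℝ) ≤ 1)]
    rwa [intervalIntegrable_iff_integrableOn_Icc_of_le (by norm_num)] at hf
  have hc := (intervalIntegral.continuousOn_primitive_interval hint) 0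
    (by rw [uIcc_of_le (by norm_num : (0:ℝ) ≤ 1)]; exact ⟨le_refl 0, by norm_num⟩)
  have h2 : Tendsto (fun x => ∫ v in (0:ℝ)..x, f v) (𝓝[uIcc (0:ℝ) 1] 0)
      (𝓝 (∫ v in (0:ℝ)..(0:ℝ), f v)) := hc
  rw [intervalIntegral.integral_same] at h2
  refine h2.mono_left ?_
  rw [uIcc_of_le (by norm_num : (0:ℝ) ≤ 1),
    ← nhdsWithin_Ioc_eq_nhdsGT (by norm_num : (0:ℝ) < 1)]
  exact nhdsWithin_mono _ Ioc_subset_Icc_self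

lemma tendsto_pow_mul_log (n : ℕ) :
    Tendsto (fun x : ℝ => x ^ (n+1) * Real.log x) (𝓝[>] (0:ℝ)) (𝓝 0) := by
  have base : Tendsto (fun x : ℝ => x * Real.log x) (𝓝[>] (0:ℝ)) (𝓝 0) := by
    have := tendsto_log_mul_rpow_nhdsGT_zero (zero_lt_one)
    simpa [mul_comm, Real.rpow_one] using this
  refine tendsto_of_tendsto_of_tendsto_of_le_of_le' base tendsto_const_nhds ?_ ?_
  · filter_upwards [self_mem_nhdsWithin, Ioo_mem_nhdsGT_of_mem (by norm_num : (0:ℝ) ∈ Ico 0 1)]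
      with x hx hx1
    have hlog : Real.log x ≤ 0 := Real.log_nonpos (le_of_lt hx) hx1.2.le
    have h1 : x ^ (n+1) ≤ x := by
      calc x ^ (n+1) ≤ x ^ 1 := pow_le_pow_of_le_one (le_of_lt hx) hx1.2.le (by omega)
      _ = x := pow_one x
    nlinarith [pow_pos (show (0:ℝ) < x from hx) (n+1)]
  · filter_upwards [self_mem_nhdsWithin, Ioo_mem_nhdsGT_of_mem (by norm_num : (0:ℝ) ∈ Ico 0 1)]
      with x hx hx1
    have hlog : Real.log x ≤ 0 := Real.log_nonpos (le_of_lt hx) hx1.2.le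
    nlinarith [pow_pos (show (0:ℝ) < x from hx) (n+1)]


lemma term_integral (n : ℕ) :
    ∫ v in (0:ℝ)..1, v ^ n * (-Real.log v) = 1/((n:ℝ)+1)^2 := by
  set F : ℝ → ℝ := fun x => x^(n+1)/((n:ℝ)+1)^2 - x^(n+1) * Real.log x/((n:ℝ)+1) with hF
  have hderiv : ∀ x : ℝ, 0 < x → HasDerivAt F (x ^ n * (-Real.log x)) x := by
    intro x hx
    have h1 : HasDerivAt (fun y : ℝ => y^(n+1)) (((n:ℝ)+1) * x^n) x := by
      have := hasDerivAt_pow (n+1) x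
      simpa [Nat.cast_add, Nat.cast_one] using this
    have h2 : HasDerivAt Real.log x⁻¹ x := Real.hasDerivAt_log (ne_of_gt hx)
    have h3 := (h1.div_const (((n:ℝ)+1)^2)).sub ((h1.mul h2).div_const ((n:ℝ)+1))
    refine h3.congr_deriv ?_
    have hne : ((n:ℝ)+1) ≠ 0 := by positivity
    have hp : x^(n+1) * x⁻¹ = x^n := by
      rw [pow_succ]; field_simp
    rw [hp]
    field_simp
    ring
  have key : ∀ᶠ ε in 𝓝[>] (0:ℝ), (∫ v in ε..1, v ^ n * (-Real.log v)) = F 1 - F ε := by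
    filter_upwards [Ioc_mem_nhdsGT_of_mem (by norm_num : (0:ℝ) ∈ Ico 0 1)] with ε hε
    refine integral_eq_sub_of_hasDerivAt (fun x hx => ?_) ((int_pow_neg_log n).mono_set ?_)
    · rw [uIcc_of_le hε.2] at hx
      exact hderiv x (lt_of_lt_of_le hε.1 hx.1)
    · rw [uIcc_of_le hε.2, uIcc_of_le (by norm_num : (0:ℝ) ≤ 1)]
      exact Icc_subset_Icc hε.1.le (le_refl 1)
  have lim1 : Tendsto (fun ε => ∫ v in ε..1, v ^ n * (-Real.log v)) (𝓝[>] (0:ℝ))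
      (𝓝 (∫ v in (0:ℝ)..1, v ^ n * (-Real.log v))) := tendsto_primitive_left (int_pow_neg_log n)
  have limF : Tendsto (fun ε => F 1 - F ε) (𝓝[>] (0:ℝ)) (𝓝 (1/((n:ℝ)+1)^2)) := by
    have hF1 : F 1 = 1/((n:ℝ)+1)^2 := by simp [hF]
    have l2 : Tendsto F (𝓝[>] (0:ℝ)) (𝓝 0) := by
      have a1 : Tendsto (fun x : ℝ => x^(n+1)/((n:ℝ)+1)^2) (𝓝[>] (0:ℝ)) (𝓝 0) := by
        have : Tendsto (fun x : ℝ => x^(n+1)) (𝓝 (0:ℝ)) (𝓝 0) := by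
          simpa using (continuous_pow (n+1)).tendsto (0:ℝ)
        simpa using (this.mono_left nhdsWithin_le_nhds).div_const (((n:ℝ)+1)^2)
      have a2 : Tendsto (fun x : ℝ => x^(n+1) * Real.log x/((n:ℝ)+1)) (𝓝[>] (0:ℝ)) (𝓝 0) := by
        simpa using (tendsto_pow_mul_log n).div_const ((n:ℝ)+1)
      simpa using a1.sub a2
    rw [← hF1]
    simpa using (tendsto_const_nhds.sub l2).congr (fun ε => by ring_nf)
  have := lim1.congr' key
  have heq := tendsto_nhds_unique this limF
  exact heq


lemma hasSum_eta2 : HasSum (fun n : ℕ => (-1:ℝ)^n / ((n:ℝ)+1)^2) (π^2/12) := by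
  have hζ : HasSum (fun n : ℕ => 1 / ((n:ℝ))^2) (π^2/6) := hasSum_zeta_two
  have hA : HasSum (fun n : ℕ => 1 / ((n:ℝ)+1)^2) (π^2/6) := by
    have h0 : HasSum (fun n : ℕ => 1 / (((n+1:ℕ)):ℝ)^2) (π^2/6) := by
      have h1 := (hasSum_nat_add_iff (f := fun n : ℕ => 1/((n:ℝ))^2) (g := π^2/6) 1).2
      have h2 : (π^2/6 : ℝ) + ∑ i ∈ Finset.range 1, 1/((i:ℝ))^2 = π^2/6 := by
        simp
      rw [h2] at h1
      exact h1 hζ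
    refine h0.congr_fun fun n => by push_cast; ring_nf
  set g : ℕ → ℝ := fun n => if Odd n then 2/((n:ℝ)+1)^2 else 0 with hg
  have hi : Function.Injective (fun m : ℕ => 2*m+1) := by
    intro a b hab
    dsimp at hab
    omega
  have hcomp : HasSum ((g ∘ fun m : ℕ => 2*m+1)) (π^2/12) := by
    have h2 : HasSum (fun m : ℕ => (1/2) * (1 / ((m:ℝ)+1)^2)) ((1/2) * (π^2/6)) :=
      hA.mul_left _
    have : (1/2 : ℝ) * (π^2/6) = π^2/12 := by ring
    rw [this] at h2
    refine h2.congr_fun fun m => ?_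
    have hodd : Odd (2*m+1) := ⟨m, by ring⟩
    simp only [hg, Function.comp_apply, if_pos hodd]
    push_cast
    field_simp
    ring
  have hzero : ∀ x ∉ Set.range (fun m : ℕ => 2*m+1), g x = 0 := by
    intro x hx
    have : ¬ Odd x := by
      rintro ⟨m, hm⟩
      exact hx ⟨m, by dsimp; omega⟩
    simp [hg, this]
  have hgsum : HasSum g (π^2/12) := (hi.hasSum_iff hzero).1 hcomp
  have := hA.sub hgsum
  have hval : π^2/6 - π^2/12 = π^2/12 := by ring
  rw [hval] at this
  refine this.congr_fun fun n => ?_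
  rcases Nat.even_or_odd n with he | ho
  · simp [hg, Nat.not_odd_iff_even.2 he, he.neg_one_pow]
  · simp only [hg, if_pos ho, ho.neg_one_pow]
    ring

lemma J_eq : ∫ v in (0:ℝ)..1, q v = π^2/12 := by
  set μ := volume.restrict (Ioo (0:ℝ) 1) with hμ
  set F : ℕ → ℝ → ℝ := fun N v => (∑ n ∈ Finset.range N, (-v)^n) * (-Real.log v) with hFdef
  have hterm_int : ∀ n : ℕ, Integrable (fun v : ℝ => (-v)^n * (-Real.log v)) μ := by
    intro n
    have h1 : Integrable (fun v : ℝ => v^n * (-Real.log v)) μ := by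
      have := (intervalIntegrable_iff_integrableOn_Ioc_of_le (by norm_num : (0:ℝ) ≤ 1)).1
        (int_pow_neg_log n)
      exact this.mono_set Ioo_subset_Ioc_self
    have := h1.const_mul ((-1:ℝ)^n)
    refine this.congr (Eventually.of_forall fun v => ?_)
    rw [neg_pow]
    ring
  have hbound_int : Integrable (fun v : ℝ => 2 * (-Real.log v)) μ := by
    have := (intervalIntegrable_iff_integrableOn_Ioc_of_le (by norm_num : (0:ℝ) ≤ 1)).1 int_neg_log
    exact (this.mono_set Ioo_subset_Ioc_self).const_mul 2
  have hmem : ∀ᵐ v ∂μ, v ∈ Ioo (0:ℝ) 1 := ae_restrict_mem measurableSet_Ioo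
  have tend1 : Tendsto (fun N => ∫ v, F N v ∂μ) atTop (𝓝 (∫ v, q v ∂μ)) := by
    refine MeasureTheory.tendsto_integral_of_dominated_convergence
      (fun v => 2 * (-Real.log v)) (fun N => ?_) hbound_int (fun N => ?_) ?_
    · exact ((Finset.aestronglyMeasurable_fun_sum (Finset.range N)
        (fun n _ => ((measurable_id.neg.pow_const n).aestronglyMeasurable))).mul
        Real.measurable_log.neg.aestronglyMeasurable)
    · filter_upwards [hmem] with v hv
      have hv0 : (0:ℝ) < v := hv.1
      have hv1 : v < 1 := hv.2
      have hlog : (0:ℝ) ≤ -Real.log v := by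
        have := Real.log_nonpos hv0.le hv1.le; linarith
      have hsum : |∑ n ∈ Finset.range N, (-v)^n| ≤ 2 := by
        rw [geom_sum_eq (by intro hcon; nlinarith [hcon] : (-v) ≠ 1)]
        rw [abs_div]
        have h1 : |(-v)^N - 1| ≤ 2 := by
          have hb : |(-v)^N| ≤ 1 := by
            rw [abs_pow, abs_neg, abs_of_pos hv0]
            exact pow_le_one₀ hv0.le hv1.le
          have := abs_sub ((-v)^N) 1
          rw [abs_one] at this
          linarith
        have h2 : (1:ℝ) ≤ |(-v) - 1| := by
          rw [abs_of_nonpos (by linarith)]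
          linarith
        calc |(-v)^N - 1| / |(-v) - 1| ≤ 2 / 1 := by
              apply div_le_div₀ (by norm_num) h1 (by norm_num) h2
          _ = 2 := by norm_num
      rw [Real.norm_eq_abs, abs_mul, abs_of_nonneg hlog]
      calc |∑ n ∈ Finset.range N, (-v)^n| * (-Real.log v) ≤ 2 * (-Real.log v) := by
            apply mul_le_mul_of_nonneg_right hsum hlog
        _ ≤ 2 * (-Real.log v) := le_refl _
    · filter_upwards [hmem] with v hv
      have habs : |(-v)| < 1 := by rw [abs_neg, abs_of_pos hv.1]; exact hv.2
      have hgeo : Tendsto (fun N => ∑ n ∈ Finset.range N, (-v)^n) atTop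
          (𝓝 (1 - (-v))⁻¹) := (hasSum_geometric_of_abs_lt_one habs).tendsto_sum_nat
      have := hgeo.mul_const (-Real.log v)
      have heq : (1 - (-v))⁻¹ * (-Real.log v) = q v := by
        rw [q]
        field_simp
        ring
      rw [heq] at this
      exact this
  have heval : ∀ N, ∫ v, F N v ∂μ = ∑ n ∈ Finset.range N, (-1:ℝ)^n/((n:ℝ)+1)^2 := by
    intro N
    have h1 : ∫ v, F N v ∂μ = ∑ n ∈ Finset.range N, ∫ v, (-v)^n * (-Real.log v) ∂μ := by
      rw [← MeasureTheory.integral_finset_sum _ (fun n _ => hterm_int n)]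
      congr 1
      ext v
      show (∑ n ∈ Finset.range N, (-v)^n) * (-Real.log v) = _
      rw [Finset.sum_mul]
    rw [h1]
    refine Finset.sum_congr rfl fun n _ => ?_
    have h2 : ∫ v, (-v)^n * (-Real.log v) ∂μ = (-1:ℝ)^n * ∫ v, v^n * (-Real.log v) ∂μ := by
      rw [← MeasureTheory.integral_const_mul]
      congr 1; ext v; rw [neg_pow]; ring
    have h3 : ∫ v, v^n * (-Real.log v) ∂μ = 1/((n:ℝ)+1)^2 := by
      have := term_integral n
      rw [intervalIntegral.integral_of_le (by norm_num : (0:ℝ) ≤ 1),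
        MeasureTheory.integral_Ioc_eq_integral_Ioo] at this
      exact this
    rw [h2, h3]
    ring
  have tend2 : Tendsto (fun N => ∑ n ∈ Finset.range N, (-1:ℝ)^n/((n:ℝ)+1)^2) atTop
      (𝓝 (π^2/12)) := hasSum_eta2.tendsto_sum_nat
  have := tendsto_nhds_unique (tend1.congr (fun N => (heval N))) tend2
  rw [intervalIntegral.integral_of_le (by norm_num : (0:ℝ) ≤ 1),
    MeasureTheory.integral_Ioc_eq_integral_Ioo]
  exact this


lemma inner_eq {u : ℝ} (hu0 : 0 < u) (hu1 : u ≤ 1) :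
    (∫ r in u..((1 + u) / 2), (1 / r) * Real.log ((1 + u) / r - 1)) = ∫ v in u..1, h v := by
  have hu' : (0:ℝ) < 1 + u := by linarith
  set φ : ℝ → ℝ := fun v => (1 + u) * v / (1 + v) with hφ
  set φ' : ℝ → ℝ := fun v => (1 + u) / (1 + v) ^ 2 with hφ'
  set g : ℝ → ℝ := fun r => (1 / r) * Real.log ((1 + u) / r - 1) with hg
  have huIcc : uIcc u 1 = Icc u 1 := uIcc_of_le hu1
  have hvpos : ∀ v ∈ uIcc u 1, 0 < v := by
    rw [huIcc]; intro v hv; exact lt_of_lt_of_le hu0 hv.1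
  have hder : ∀ v ∈ uIcc u 1, HasDerivAt φ (φ' v) v := by
    intro v hv
    have hv0 : 0 < v := hvpos v hv
    have h1v : (1 + v) ≠ 0 := by positivity
    have hnum : HasDerivAt (fun y : ℝ => (1 + u) * y) (1 + u) v := by
      simpa using (hasDerivAt_id v).const_mul (1 + u)
    have hden : HasDerivAt (fun y : ℝ => 1 + y) 1 v := by
      simpa using (hasDerivAt_id v).const_add (1:ℝ)
    have := hnum.div hden h1v
    refine this.congr_deriv ?_
    rw [hφ']
    congr 1
    ring
  have hcontφ' : ContinuousOn φ' (uIcc u 1) := by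
    apply ContinuousOn.div continuousOn_const
    · exact ((continuous_const.add continuous_id).pow 2).continuousOn
    · intro v hv
      have hv0 : 0 < v := hvpos v hv
      positivity
  have himg : φ '' uIcc u 1 ⊆ Ioo 0 (1 + u) := by
    rintro r ⟨v, hv, rfl⟩
    have hv0 : 0 < v := hvpos v hv
    constructor
    · apply div_pos (by positivity) (by positivity)
    · rw [div_lt_iff₀ (by positivity)]
      nlinarith
  have hcontg : ContinuousOn g (Ioo 0 (1 + u)) := by
    have hc1 : ContinuousOn (fun r : ℝ => 1 / r) (Ioo 0 (1 + u)) :=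
      continuousOn_const.div continuousOn_id (fun r hr => ne_of_gt hr.1)
    refine hc1.mul (ContinuousOn.log ?_ ?_)
    · exact (continuousOn_const.div continuousOn_id (fun r hr => ne_of_gt hr.1)).sub
        continuousOn_const
    · intro r hr
      have h1 : 1 < (1 + u) / r := by
        rw [lt_div_iff₀ hr.1]
        linarith [hr.2]
      exact ne_of_gt (by linarith)
  have hsub := intervalIntegral.integral_comp_smul_deriv' hder hcontφ' (hcontg.mono himg)
  have hφu : φ u = u := by rw [hφ]; field_simp
  have hφ1 : φ 1 = (1 + u) / 2 := by rw [hφ]; norm_num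
  rw [hφu, hφ1] at hsub
  rw [← hsub]
  apply intervalIntegral.integral_congr
  intro v hv
  have hv0 : 0 < v := hvpos v hv
  have h1v : (0:ℝ) < 1 + v := by linarith
  have hφv : φ v = (1 + u) * v / (1 + v) := rfl
  have hφvpos : (0:ℝ) < (1 + u) * v / (1 + v) := by positivity
  have e1 : (1 + u) / φ v - 1 = 1 / v := by
    rw [hφv, div_div_eq_mul_div, mul_div_mul_left _ _ (ne_of_gt hu'),
      div_sub_one (ne_of_gt hv0)]
    congr 1
    ring
  have e2 : 1 / φ v = (1 + v) / ((1 + u) * v) := by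
    rw [hφv, one_div, inv_div]
  have e3 : φ' v * ((1 + v) / ((1 + u) * v) * (-Real.log v)) = h v := by
    rw [hφ', h]
    field_simp
  calc φ' v • (g ∘ φ) v = φ' v * ((1/(φ v)) * Real.log ((1+u)/(φ v) - 1)) := by
        rw [smul_eq_mul]; rfl
    _ = φ' v * ((1 + v)/((1+u)*v) * Real.log (1/v)) := by rw [e1, e2]
    _ = φ' v * ((1 + v)/((1+u)*v) * (-Real.log v)) := by rw [one_div, Real.log_inv]
    _ = h v := e3

lemma measurable_h : Measurable h :=
  (Real.measurable_log.neg).div (measurable_id.mul (measurable_const.add measurable_id))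

lemma contOn_h : ∀ x : ℝ, 0 < x → ContinuousAt h x := by
  intro x hx
  apply ContinuousAt.div
  · exact (Real.continuousAt_log (ne_of_gt hx)).neg
  · exact (continuous_id.mul (continuous_const.add continuous_id)).continuousAt
  · positivity

lemma int_h {u : ℝ} (hu0 : 0 < u) (hu1 : u ≤ 1) : IntervalIntegrable h volume u 1 := by
  apply ContinuousOn.intervalIntegrable
  intro x hx
  rw [uIcc_of_le hu1] at hx
  exact (contOn_h x (lt_of_lt_of_le hu0 hx.1)).continuousWithinAt

lemma h_nonneg : ∀ v ∈ Icc (0:ℝ) 1, 0 ≤ h v := by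
  intro v hv
  rcases eq_or_lt_of_le hv.1 with rfl | hv0
  · simp [h]
  · have : Real.log v ≤ 0 := Real.log_nonpos hv0.le hv.2
    apply div_nonneg (by linarith)
    nlinarith

lemma P_nonneg {u : ℝ} (hu0 : 0 < u) (hu1 : u ≤ 1) : 0 ≤ P u := by
  apply intervalIntegral.integral_nonneg hu1
  intro v hv
  exact h_nonneg v ⟨le_trans hu0.le hv.1, hv.2⟩

lemma P_le {u : ℝ} (hu0 : 0 < u) (hu1 : u ≤ 1) : P u ≤ (Real.log u)^2 / 2 := by
  have hcont2 : ContinuousOn (fun v : ℝ => -Real.log v / v) (Icc u 1) := by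
    intro x hx
    have hx0 : 0 < x := lt_of_lt_of_le hu0 hx.1
    exact (((Real.continuousAt_log (ne_of_gt hx0)).neg).div continuousAt_id
      (ne_of_gt hx0)).continuousWithinAt
  have hint2 : IntervalIntegrable (fun v : ℝ => -Real.log v / v) volume u 1 := by
    apply ContinuousOn.intervalIntegrable
    rwa [uIcc_of_le hu1]
  have hmono : P u ≤ ∫ v in u..1, -Real.log v / v := by
    apply intervalIntegral.integral_mono_on hu1 (int_h hu0 hu1) hint2
    intro v hv
    have hv0 : 0 < v := lt_of_lt_of_le hu0 hv.1
    have hlog : 0 ≤ -Real.log v := by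
      have := Real.log_nonpos hv0.le hv.2; linarith
    rw [h, div_le_div_iff₀ (by positivity) hv0]
    nlinarith [mul_nonneg (mul_nonneg hlog hv0.le) hv0.le]
  have hval : ∫ v in u..1, -Real.log v / v = (Real.log u)^2 / 2 := by
    have hder : ∀ x ∈ uIcc u 1, HasDerivAt (fun v : ℝ => -(Real.log v)^2/2)
        (-Real.log x / x) x := by
      intro x hx
      rw [uIcc_of_le hu1] at hx
      have hx0 : 0 < x := lt_of_lt_of_le hu0 hx.1
      have h1 : HasDerivAt Real.log x⁻¹ x := Real.hasDerivAt_log (ne_of_gt hx0)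
      have h2 := ((h1.mul h1).div_const 2).neg
      have h3 : -((x⁻¹ * Real.log x + Real.log x * x⁻¹) / 2) = -Real.log x / x := by
        field_simp
        ring
      rw [h3] at h2
      refine h2.congr_of_eventuallyEq (Eventually.of_forall fun y => ?_)
      show -(Real.log y)^2/2 = -((Real.log y * Real.log y)/2)
      ring
    have hftc := intervalIntegral.integral_eq_sub_of_hasDerivAt hder hint2
    rw [hftc]
    simp
    ring
  rw [hval] at hmono
  exact hmono

lemma int_P : IntervalIntegrable P volume 0 1 := by
  apply int_of_bound
  · apply ContinuousOn.aestronglyMeasurable _ measurableSet_Ioc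
    intro x hx
    have hx0 : 0 < x := hx.1
    have : HasDerivAt P (-(h x)) x := by
      apply intervalIntegral.integral_hasDerivAt_left (int_h hx0 hx.2)
      · exact ⟨univ, univ_mem, measurable_h.aestronglyMeasurable.restrict⟩
      · exact contOn_h x hx0
    exact this.continuousAt.continuousWithinAt
  · intro v hv
    have h1 := P_le hv.1 hv.2
    have h2 := P_nonneg hv.1 hv.2
    have h3 := sq_log_le hv.1 hv.2
    rw [Real.norm_eq_abs, abs_of_nonneg h2]
    linarith

lemma hB_deriv : ∀ x ∈ Ioc (0:ℝ) 1, HasDerivAt (fun y => y * P y + Q y) (P x) x := by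
  intro x hx
  have hx0 : 0 < x := hx.1
  have hP : HasDerivAt P (-(h x)) x := by
    apply intervalIntegral.integral_hasDerivAt_left (int_h hx0 hx.2)
    · exact ⟨univ, univ_mem, measurable_h.aestronglyMeasurable.restrict⟩
    · exact contOn_h x hx0
  have hQ : HasDerivAt Q (q x) x := by
    apply intervalIntegral.integral_hasDerivAt_right (int_q.mono_set ?_)
    · exact ⟨univ, univ_mem, ((Real.measurable_log.neg).div
        (measurable_const.add measurable_id)).aestronglyMeasurable.restrict⟩
    · apply ContinuousAt.div
      · exact (Real.continuousAt_log (ne_of_gt hx0)).neg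
      · exact (continuous_const.add continuous_id).continuousAt
      · positivity
    · rw [uIcc_of_le hx0.le, uIcc_of_le (by norm_num : (0:ℝ) ≤ 1)]
      exact Icc_subset_Icc (le_refl 0) hx.2
  have hmul : HasDerivAt (fun y => y * P y) (1 * P x + x * -(h x)) x :=
    (hasDerivAt_id x).mul hP
  have := hmul.add hQ
  have heq : 1 * P x + x * -(h x) + q x = P x := by
    have hxh : x * h x = q x := by
      rw [h, q]
      field_simp
    rw [one_mul]
    rw [mul_neg, ← hxh]
    ring
  rwa [heq] at this

lemma tendsto_mul_sq_log : Tendsto (fun x : ℝ => x * (Real.log x)^2 / 2) (𝓝[>] (0:ℝ)) (𝓝 0) := by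
  have t1 : Tendsto (fun x : ℝ => Real.log x * x ^ ((1:ℝ)/2)) (𝓝[>] (0:ℝ)) (𝓝 0) :=
    tendsto_log_mul_rpow_nhdsGT_zero (by norm_num)
  have t2 := (t1.mul t1).div_const 2
  rw [mul_zero, zero_div] at t2
  refine t2.congr' ?_
  filter_upwards [self_mem_nhdsWithin] with x hx
  have hx0 : (0:ℝ) < x := hx
  have : x ^ ((1:ℝ)/2) * x ^ ((1:ℝ)/2) = x := by
    rw [← Real.rpow_add hx0]
    norm_num
  field_simp
  nlinarith [this]

lemma final_P : ∫ u in (0:ℝ)..1, P u = π^2/12 := by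
  have key : ∀ᶠ ε in 𝓝[>] (0:ℝ),
      (∫ v in ε..1, P v) = (1 * P 1 + Q 1) - (ε * P ε + Q ε) := by
    filter_upwards [Ioc_mem_nhdsGT_of_mem (by norm_num : (0:ℝ) ∈ Ico 0 1)] with ε hε
    have hder : ∀ x ∈ uIcc ε 1, HasDerivAt (fun y => y * P y + Q y) (P x) x := by
      intro x hx
      rw [uIcc_of_le hε.2] at hx
      exact hB_deriv x ⟨lt_of_lt_of_le hε.1 hx.1, hx.2⟩
    have hint : IntervalIntegrable P volume ε 1 := by
      apply int_P.mono_set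
      rw [uIcc_of_le hε.2, uIcc_of_le (by norm_num : (0:ℝ) ≤ 1)]
      exact Icc_subset_Icc hε.1.le (le_refl 1)
    exact intervalIntegral.integral_eq_sub_of_hasDerivAt hder hint
  have lim1 : Tendsto (fun ε => ∫ v in ε..1, P v) (𝓝[>] (0:ℝ))
      (𝓝 (∫ v in (0:ℝ)..1, P v)) := tendsto_primitive_left int_P
  have hQ0 : Tendsto Q (𝓝[>] (0:ℝ)) (𝓝 0) := tendsto_primitive_right int_q
  have hPe : Tendsto (fun ε => ε * P ε) (𝓝[>] (0:ℝ)) (𝓝 0) := by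
    refine tendsto_of_tendsto_of_tendsto_of_le_of_le' tendsto_const_nhds tendsto_mul_sq_log ?_ ?_
    · filter_upwards [Ioc_mem_nhdsGT_of_mem (by norm_num : (0:ℝ) ∈ Ico 0 1)] with ε hε
      exact mul_nonneg hε.1.le (P_nonneg hε.1 hε.2)
    · filter_upwards [Ioc_mem_nhdsGT_of_mem (by norm_num : (0:ℝ) ∈ Ico 0 1)] with ε hε
      have := P_le hε.1 hε.2
      have h2 : ε * P ε ≤ ε * ((Real.log ε)^2/2) := by
        apply mul_le_mul_of_nonneg_left this hε.1.le
      calc ε * P ε ≤ ε * ((Real.log ε)^2/2) := h2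
        _ = ε * (Real.log ε)^2 / 2 := by ring
  have lim2 : Tendsto (fun ε => (1 * P 1 + Q 1) - (ε * P ε + Q ε)) (𝓝[>] (0:ℝ))
      (𝓝 ((1 * P 1 + Q 1) - (0 + 0))) := tendsto_const_nhds.sub (hPe.add hQ0)
  have hP1 : P 1 = 0 := intervalIntegral.integral_same
  have hQ1 : Q 1 = π^2/12 := J_eq
  have := tendsto_nhds_unique (lim1.congr' key) lim2
  rw [this, hP1, hQ1]
  ring

end PiSq12

/-- The iterated integral `∫₀¹ (∫_u^{(1+u)/2} (1/r)·log((1+u)/r − 1) dr) du`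
equals `π²/12`. -/
theorem iterated_integral_log_eq_pi_sq_div_twelve :
    ∫ u in (0:ℝ)..1, (∫ r in u..((1 + u) / 2), (1 / r) * Real.log ((1 + u) / r - 1))
      = Real.pi ^ 2 / 12 := by
  have h1 : (∫ u in (0:ℝ)..1,
      (∫ r in u..((1 + u) / 2), (1 / r) * Real.log ((1 + u) / r - 1)))
      = ∫ u in (0:ℝ)..1, PiSq12.P u := by
    apply intervalIntegral.integral_congr_ae
    refine Filter.Eventually.of_forall fun x hx => ?_
    rw [Set.uIoc_of_le (by norm_num : (0:ℝ) ≤ 1)] at hx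
    exact PiSq12.inner_eq hx.1 hx.2
  rw [h1, PiSq12.final_P]
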